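/- In the integral quandle ring of the dihedral quandle R_n with n odd, for the fixed basepoint a_0 and e_i = a_i - a_0, each generator e_i satisfies e_i·e_j ∈ Δ²(R_n), and Δ(R_n)/Δ²(R_n) is cyclic of order n. -/
import Mathlib


/-- Dihedral quandle operation on `ZMod n`: `a · b = 2b - a`. -/
def dq (n : ℕ) (a b : ZMod n) : ZMod n := 2 * b - a

/-- Quandle ring multiplication on `ℤ[R_n] = ZMod n →₀ ℤ`. -/
noncomputable def qmul (n : ℕ) (x y : ZMod n →₀ ℤ) : ZMod n →₀ ℤ :=
  x.sum fun a r => y.sum fun b s => Finsupp.single (dq n a b) (r * s)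

/-- Augmentation map. -/
noncomputable def aug (n : ℕ) : (ZMod n →₀ ℤ) →ₗ[ℤ] ℤ :=
  Finsupp.lsum ℤ fun _ => LinearMap.id

/-- `e i = a_i - a_0`. -/
noncomputable def e (n : ℕ) (i : ZMod n) : ZMod n →₀ ℤ :=
  Finsupp.single i 1 - Finsupp.single 0 1

/-- Augmentation ideal. -/
noncomputable def Δ (n : ℕ) : Submodule ℤ (ZMod n →₀ ℤ) := LinearMap.ker (aug n)

noncomputable def Δ2 (n : ℕ) : Submodule ℤ (ZMod n →₀ ℤ) :=
  Submodule.span ℤ {z | ∃ x ∈ Δ n, ∃ y ∈ Δ n, z = qmul n x y}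

noncomputable def Δ3 (n : ℕ) : Submodule ℤ (ZMod n →₀ ℤ) :=
  Submodule.span ℤ {z | ∃ x ∈ Δ2 n, ∃ y ∈ Δ n, z = qmul n x y}

-- aux lemmas
lemma aug_single (n : ℕ) (a : ZMod n) (r : ℤ) : aug n (Finsupp.single a r) = r := by
  simp [aug]

lemma aug_e (n : ℕ) (i : ZMod n) : aug n (e n i) = 0 := by
  simp [e, aug_single]

lemma e_mem_Δ (n : ℕ) (i : ZMod n) : e n i ∈ Δ n := by
  simp [Δ, LinearMap.mem_ker, aug_e]

lemma e_zero (n : ℕ) : e n 0 = 0 := by simp [e]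

lemma qmul_e_e (n : ℕ) (i j : ZMod n) :
    qmul n (e n i) (e n j) = e n (2*j - i) - e n (2*j) - e n (-i) := by
  have hinner : ∀ (a : ZMod n) (r : ℤ), ((e n j).sum fun b s => Finsupp.single (dq n a b) (r * s))
      = Finsupp.single (dq n a j) r - Finsupp.single (dq n a 0) r := by
    intro a r
    unfold e
    rw [Finsupp.sum_sub_index (by intro x y z; rw [mul_sub]; simp [Finsupp.single_sub])]
    rw [Finsupp.sum_single_index (by simp), Finsupp.sum_single_index (by simp)]
    simp
  unfold qmul
  conv_lhs => rw [show (e n i) = Finsupp.single i 1 - Finsupp.single 0 1 from rfl]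
  have hadd : ∀ (a : ZMod n) (r1 r2 : ℤ),
      ((e n j).sum fun b s => Finsupp.single (dq n a b) ((r1 - r2) * s)) =
      ((e n j).sum fun b s => Finsupp.single (dq n a b) (r1 * s)) -
      ((e n j).sum fun b s => Finsupp.single (dq n a b) (r2 * s)) := by
    intro a r1 r2
    simp only [hinner]
    rw [Finsupp.single_sub, Finsupp.single_sub]
    abel
  rw [Finsupp.sum_sub_index hadd]
  rw [Finsupp.sum_single_index (by simp only [hinner]; simp),
      Finsupp.sum_single_index (by simp only [hinner]; simp)]
  simp only [hinner]
  simp only [dq]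
  rw [show (2*(0:ZMod n) - i) = -i by ring, show (2*j - (0:ZMod n)) = 2*j by ring,
      show (2*(0:ZMod n) - 0) = (0:ZMod n) by ring]
  unfold e
  abel

noncomputable def phi (n : ℕ) : (ZMod n →₀ ℤ) →ₗ[ℤ] ZMod n :=
  Finsupp.lsum ℤ fun i => LinearMap.toSpanSingleton ℤ (ZMod n) i

lemma phi_single (n : ℕ) (a : ZMod n) (r : ℤ) :
    phi n (Finsupp.single a r) = (r : ZMod n) * a := by
  simp [phi, LinearMap.toSpanSingleton, zsmul_eq_mul]

lemma phi_e (n : ℕ) (i : ZMod n) : phi n (e n i) = i := by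
  simp [e, phi_single]

lemma aug_apply (n : ℕ) (x : ZMod n →₀ ℤ) : aug n x = x.sum fun _ r => r := rfl

lemma cast_aug (n : ℕ) (y : ZMod n →₀ ℤ) :
    ((aug n y : ℤ) : ZMod n) = y.sum fun _ s => (s : ZMod n) := by
  rw [aug_apply]
  exact map_finsuppSum (Int.castRingHom (ZMod n)) y _

lemma phi_sum_eq (n : ℕ) (y : ZMod n →₀ ℤ) :
    phi n y = y.sum fun b s => (s : ZMod n) * b := by
  conv_lhs => rw [← Finsupp.sum_single y, map_finsuppSum]
  exact Finsupp.sum_congr fun b _ => by rw [phi_single]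

lemma aug_qmul (n : ℕ) (x y : ZMod n →₀ ℤ) :
    aug n (qmul n x y) = aug n x * aug n y := by
  unfold qmul
  rw [map_finsuppSum]
  have h1 : ∀ (a : ZMod n) (r : ℤ),
      aug n (y.sum fun b s => Finsupp.single (dq n a b) (r * s)) = r * aug n y := by
    intro a r
    rw [map_finsuppSum, aug_apply, Finsupp.mul_sum]
    exact Finsupp.sum_congr fun b _ => by rw [aug_single]
  calc (x.sum fun a r => aug n (y.sum fun b s => Finsupp.single (dq n a b) (r * s)))
      = x.sum fun a r => r * aug n y := Finsupp.sum_congr fun a _ => h1 _ _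
    _ = (x.sum fun _ r => r) * aug n y := (Finsupp.sum_mul _ _).symm
    _ = aug n x * aug n y := by simp only [aug_apply]

lemma phi_qmul (n : ℕ) (x y : ZMod n →₀ ℤ) (hx : aug n x = 0) (hy : aug n y = 0) :
    phi n (qmul n x y) = 0 := by
  unfold qmul
  rw [map_finsuppSum]
  have h1 : ∀ (a : ZMod n) (r : ℤ),
      phi n (y.sum fun b s => Finsupp.single (dq n a b) (r * s)) = (r : ZMod n) * (2 * phi n y) := by
    intro a r
    rw [map_finsuppSum]
    calc (y.sum fun b s => phi n (Finsupp.single (dq n a b) (r * s)))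
        = y.sum fun b s => (2 * (r : ZMod n)) * ((s : ZMod n) * b)
            - ((r : ZMod n) * a) * (s : ZMod n) :=
          Finsupp.sum_congr fun b _ => by rw [phi_single]; unfold dq; push_cast; ring
      _ = (2 * (r : ZMod n)) * (y.sum fun b s => (s : ZMod n) * b)
            - ((r : ZMod n) * a) * (y.sum fun _ s => (s : ZMod n)) := by
          rw [Finsupp.sum_sub, ← Finsupp.mul_sum, ← Finsupp.mul_sum]
      _ = (r : ZMod n) * (2 * phi n y) := by
          rw [← phi_sum_eq, ← cast_aug, hy]; push_cast; ring
  calc (x.sum fun a r => phi n (y.sum fun b s => Finsupp.single (dq n a b) (r * s)))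
      = x.sum fun a r => (r : ZMod n) * (2 * phi n y) :=
        Finsupp.sum_congr fun a _ => h1 _ _
    _ = (x.sum fun _ r => (r : ZMod n)) * (2 * phi n y) := (Finsupp.sum_mul _ _).symm
    _ = 0 := by rw [← cast_aug, hx]; push_cast; ring

lemma qmul_mem_Δ2 (n : ℕ) (i j : ZMod n) : qmul n (e n i) (e n j) ∈ Δ2 n :=
  Submodule.subset_span ⟨e n i, e_mem_Δ n i, e n j, e_mem_Δ n j, rfl⟩

lemma Δ2_le_ker_phi (n : ℕ) : Δ2 n ≤ LinearMap.ker (phi n) := by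
  rw [Δ2, Submodule.span_le]
  rintro z ⟨x, hx, y, hy, rfl⟩
  simp only [SetLike.mem_coe, LinearMap.mem_ker]
  exact phi_qmul n x y (by simpa [Δ] using hx) (by simpa [Δ] using hy)

lemma Δ2_le_Δ (n : ℕ) : Δ2 n ≤ Δ n := by
  rw [Δ2, Submodule.span_le]
  rintro z ⟨x, hx, y, hy, rfl⟩
  simp only [SetLike.mem_coe, Δ, LinearMap.mem_ker] at *
  rw [aug_qmul, hx, hy, mul_zero]

lemma erel (n : ℕ) (hn : Odd n) (a b : ZMod n) :
    e n (a + b) - e n b - e n a ∈ Δ2 n := by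
  have hcop : Nat.Coprime 2 n := by
    obtain ⟨k, hk⟩ := hn
    have : Nat.gcd 2 n = 1 := by
      have h2 : n % 2 = 1 := by omega
      rw [Nat.gcd_rec, h2]; simp
    exact this
  set u : (ZMod n)ˣ := ZMod.unitOfCoprime 2 hcop with hu
  have hu2 : (u : ZMod n) = 2 := by simp [hu, ZMod.coe_unitOfCoprime]
  set j : ZMod n := (↑u⁻¹ : ZMod n) * b with hj
  have h2j : 2 * j = b := by
    rw [hj, ← hu2, ← mul_assoc, Units.mul_inv, one_mul]
  have h := qmul_mem_Δ2 n (-a) j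
  rw [qmul_e_e, h2j, neg_neg, sub_neg_eq_add, add_comm] at h
  exact h

lemma mem_Δ2_of_phi (n : ℕ) (hn : Odd n) (hn1 : 1 < n) (x : ZMod n →₀ ℤ)
    (hx : aug n x = 0) (hphi : phi n x = 0) : x ∈ Δ2 n := by
  haveI : NeZero n := ⟨by omega⟩
  set q := (Δ2 n).mkQ with hq
  have hgen : ∀ a b : ZMod n, q (e n (a + b)) = q (e n a) + q (e n b) := by
    intro a b
    have h := erel n hn a b
    rw [← Submodule.Quotient.mk_eq_zero, ← Submodule.mkQ_apply, ← hq] at h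
    rw [map_sub, map_sub] at h
    rw [sub_sub, sub_eq_zero] at h
    rw [h, add_comm]
  have hnat : ∀ k : ℕ, q (e n ((k : ℕ) : ZMod n)) = (k : ℤ) • q (e n 1) := by
    intro k
    induction k with
    | zero => simp [e_zero]
    | succ m ih => push_cast; rw [hgen, ih]; push_cast; rw [add_smul, one_smul]
  have hval : ∀ i : ZMod n, q (e n i) = ((i.val : ℤ)) • q (e n 1) := by
    intro i
    conv_lhs => rw [← ZMod.natCast_rightInverse i]
    rw [hnat]
  have hne1 : (n : ℤ) • q (e n 1) = 0 := by
    have h := hnat n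
    rw [ZMod.natCast_self, e_zero, map_zero] at h
    exact h.symm
  have hdecomp : x = x.sum fun i r => r • e n i := by
    have h1 : (x.sum fun i r => r • Finsupp.single i (1:ℤ)) = x := by
      simp [Finsupp.smul_single, Finsupp.sum_single]
    have h2 : (x.sum fun i r => r • Finsupp.single (0 : ZMod n) (1:ℤ)) =
        aug n x • Finsupp.single (0 : ZMod n) (1:ℤ) := by
      rw [aug_apply, Finsupp.sum, Finsupp.sum, Finset.sum_smul]
    unfold e
    simp only [smul_sub]
    rw [Finsupp.sum_sub, h1, h2, hx, zero_smul, sub_zero]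
  set S : ℤ := x.sum fun i r => r * (i.val : ℤ) with hS
  have hqx : q x = S • q (e n 1) := by
    conv_lhs => rw [hdecomp]
    rw [map_finsuppSum]
    calc (x.sum fun i r => q (r • e n i))
        = x.sum fun i r => (r * (i.val : ℤ)) • q (e n 1) :=
          Finsupp.sum_congr fun i _ => by rw [map_smul, hval, smul_smul]
      _ = S • q (e n 1) := by rw [hS, Finsupp.sum, Finsupp.sum, Finset.sum_smul]
  have hScast : ((S : ℤ) : ZMod n) = 0 := by
    have : ((S : ℤ) : ZMod n) = phi n x := by
      rw [hS, phi_sum_eq]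
      rw [show ((x.sum fun i r => r * (i.val : ℤ) : ℤ) : ZMod n)
          = x.sum fun i r => ((r * (i.val : ℤ) : ℤ) : ZMod n) from
          map_finsuppSum (Int.castRingHom (ZMod n)) x _]
      refine Finsupp.sum_congr fun i _ => ?_
      push_cast
      rw [ZMod.natCast_rightInverse i]
    rw [this, hphi]
  obtain ⟨m, hm⟩ := (ZMod.intCast_zmod_eq_zero_iff_dvd S n).mp hScast
  have : q x = 0 := by
    rw [hqx, hm, mul_comm, mul_smul, hne1, smul_zero]
  rwa [hq, Submodule.mkQ_apply, Submodule.Quotient.mk_eq_zero] at this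

/-- For odd `n > 1`: every product `e_i · e_j` lies in `Δ²(R_n)`, and
`Δ(R_n)/Δ²(R_n)` is cyclic of order `n`. -/
theorem stmt_17 (n : ℕ) (hn : Odd n) (hn1 : 1 < n) :
    (∀ i j : ZMod n, qmul n (e n i) (e n j) ∈ Δ2 n) ∧
    Nonempty (((Δ n) ⧸ (Δ2 n).comap (Δ n).subtype) ≃ₗ[ℤ] ZMod n) := by
  refine ⟨fun i j => qmul_mem_Δ2 n i j, ?_⟩
  haveI : NeZero n := ⟨by omega⟩
  set ψ : (Δ n) →ₗ[ℤ] ZMod n := (phi n).comp (Δ n).subtype with hψ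
  have hsurj : Function.Surjective ψ := by
    intro c
    exact ⟨⟨e n c, e_mem_Δ n c⟩, by simp [hψ, phi_e]⟩
  have hker : LinearMap.ker ψ = (Δ2 n).comap (Δ n).subtype := by
    ext x
    simp only [LinearMap.mem_ker, hψ, LinearMap.comp_apply, Submodule.mem_comap,
      Submodule.subtype_apply]
    constructor
    · intro h
      exact mem_Δ2_of_phi n hn hn1 x (by simpa [Δ] using x.2) h
    · intro h
      exact Δ2_le_ker_phi n h
  exact ⟨(Submodule.quotEquivOfEq _ _ hker.symm).trans (ψ.quotKerEquivOfSurjective hsurj)⟩
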